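/- Let a<b be real numbers and let T ≥ b−a+2. Let φ:ℝ→ℂ be continuously differentiable and ψ:ℝ→ℂ be continuous, with both φ and ψ vanishing outside the interval [a−1,b+1], and set c = (1/2)∫_{−∞}^{∞} ψ(ξ)dξ. Define w:ℝ²→ℂ by w(t,x) = (1/2)[φ(x+T−t)+φ(x−T+t)] − (1/2)∫_{x−T+t}^{x+T−t} ψ(ξ)dξ + c. Then for every x∈[a,b]: w(0,x)=0 and ∂ₜw(0,x)=0, where ∂ₜw(0,x) = (1/2)[−φ′(x+T)+φ′(x−T)] + (1/2)[ψ(x+T)+ψ(x−T)]. -/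
import Mathlib


open MeasureTheory intervalIntegral

/-- The time-reversed d'Alembert wave built from compactly supported data, with
the particular constant `c = (1/2)∫ψ`, has vanishing Cauchy data at time `t = 0`
on `[a,b]` when the final time `T ≥ b − a + 2`. -/
theorem stmt15 (a b T : ℝ) (hab : a < b) (hT : b - a + 2 ≤ T)
    (φ ψ : ℝ → ℂ) (hφ : ContDiff ℝ 1 φ) (hψ : Continuous ψ)
    (hφsupp : ∀ y : ℝ, y ∉ Set.Icc (a - 1) (b + 1) → φ y = 0)
    (hψsupp : ∀ y : ℝ, y ∉ Set.Icc (a - 1) (b + 1) → ψ y = 0)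
    (c : ℂ) (hc : c = (1 / 2 : ℂ) * ∫ ξ : ℝ, ψ ξ)
    (w : ℝ → ℝ → ℂ)
    (hw : ∀ t x : ℝ, w t x
      = (φ (x + T - t) + φ (x - T + t)) / 2
        - (1 / 2 : ℂ) * (∫ ξ in (x - T + t)..(x + T - t), ψ ξ) + c) :
    ∀ x ∈ Set.Icc a b, w 0 x = 0 ∧ deriv (fun t => w t x) 0 = 0 := by
  intro x hx
  obtain ⟨hxa, hxb⟩ := hx
  have key : ∀ t : ℝ, |t| < 1 → w t x = 0 := by
    intro t ht
    have ht' := abs_lt.mp ht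
    have h1 : b + 1 < x + T - t := by linarith [ht'.1, ht'.2]
    have h2 : x - T + t < a - 1 := by linarith [ht'.1, ht'.2]
    have hφ1 : φ (x + T - t) = 0 := hφsupp _ (by simp [Set.mem_Icc]; intro; linarith)
    have hφ2 : φ (x - T + t) = 0 := hφsupp _ (by simp [Set.mem_Icc]; intro; linarith)
    have hI : (∫ ξ in (x - T + t)..(x + T - t), ψ ξ) = ∫ ξ : ℝ, ψ ξ := by
      rw [intervalIntegral.integral_of_le (by linarith)]
      apply setIntegral_eq_integral_of_forall_compl_eq_zero
      intro y hy
      apply hψsupp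
      simp only [Set.mem_Ioc, not_and_or, not_lt, not_le] at hy
      simp only [Set.mem_Icc, not_and_or, not_le]
      rcases hy with h | h
      · left; linarith
      · right; linarith
    rw [hw, hφ1, hφ2, hI, hc]
    ring
  refine ⟨key 0 (by norm_num), ?_⟩
  have hev : (fun t => w t x) =ᶠ[nhds (0 : ℝ)] fun _ => (0 : ℂ) := by
    filter_upwards [Metric.ball_mem_nhds (0 : ℝ) one_pos] with t ht
    exact key t (by simpa [Real.dist_eq] using ht)
  rw [hev.deriv_eq]
  simp
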